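/- Let f : ℝ^d → ℝ be convex, differentiable, and L-smooth for some L > 0, and let (θ_t) be gradient descent iterates θ_{t+1} = θ_t − η_t ∇f(θ_t) with step sizes η_t ∈ (0, 1/L]. Let S := {θ* ∈ ℝ^d : f(θ*) = inf_{θ ∈ ℝ^d} f(θ)}. If S is a non-empty affine subspace of ℝ^d and Σ_{t=0}^∞ η_t = ∞, then θ_t converges to Proj_S(θ_0), the Euclidean projection of the initialization θ_0 onto S. -/

import Mathlib

open Finset Filter

section GDAux

local notation "⟪" x ", " y "⟫" => @inner ℝ _ _ x y

variable {E : Type*} [NormedAddCommGroup E] [InnerProductSpace ℝ E] [CompleteSpace E]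

lemma gd_line_deriv (f : E → ℝ) (hdiff : Differentiable ℝ f) (x v : E) (t : ℝ) :
    HasDerivAt (fun s : ℝ => f (x + s • v)) ⟪gradient f (x + t • v), v⟫ t := by
  have hline : HasDerivAt (fun s : ℝ => x + s • v) v t := by
    simpa using ((hasDerivAt_id t).smul_const v).const_add x
  have hf := (hdiff (x + t • v)).hasGradientAt.hasFDerivAt
  simpa [Function.comp_def] using hf.comp_hasDerivAt t hline

lemma gd_foc (f : E → ℝ) (hconv : ConvexOn ℝ Set.univ f) (hdiff : Differentiable ℝ f)
    (x y : E) : f x + ⟪gradient f x, y - x⟫ ≤ f y := by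
  set v := y - x
  have hφ : ConvexOn ℝ Set.univ (fun t : ℝ => f (x + t • v)) := by
    have := hconv.comp_affineMap (AffineMap.lineMap x y : ℝ →ᵃ[ℝ] E)
    simp only [Set.preimage_univ] at this
    rw [show (fun t : ℝ => f (x + t • v)) = f ∘ AffineMap.lineMap x y from ?_]
    · exact this
    funext t
    rw [Function.comp_apply, AffineMap.lineMap_apply, vsub_eq_sub, vadd_eq_add, add_comm]
  have hd := gd_line_deriv f hdiff x v 0
  simp only [zero_smul, add_zero] at hd
  have := hφ.le_slope_of_hasDerivAt (Set.mem_univ 0) (Set.mem_univ 1) one_pos hd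
  simp [slope_def_field, v, -inner_gradient_left] at this
  linarith [this]

lemma gd_descent (f : E → ℝ) (L : ℝ) (hL : 0 < L) (hdiff : Differentiable ℝ f)
    (hsmooth : ∀ x y : E, ‖gradient f x - gradient f y‖ ≤ L * ‖x - y‖)
    (x y : E) : f y ≤ f x + ⟪gradient f x, y - x⟫ + L / 2 * ‖y - x‖ ^ 2 := by
  set v := y - x
  set ψ : ℝ → ℝ := fun t => f (x + t • v) - t * ⟪gradient f x, v⟫ - L * t ^ 2 / 2 * ‖v‖ ^ 2
    with hψ
  have hd : ∀ t : ℝ, HasDerivAt ψ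
      (⟪gradient f (x + t • v), v⟫ - ⟪gradient f x, v⟫ - L * t * ‖v‖ ^ 2) t := by
    intro t
    have h1 := gd_line_deriv f hdiff x v t
    have h2 : HasDerivAt (fun t : ℝ => t * ⟪gradient f x, v⟫) ⟪gradient f x, v⟫ t := by
      simpa using (hasDerivAt_id t).mul_const _
    have h3 : HasDerivAt (fun t : ℝ => L * t ^ 2 / 2 * ‖v‖ ^ 2) (L * t * ‖v‖ ^ 2) t := by
      have : HasDerivAt (fun t : ℝ => t ^ 2) (2 * t) t := by
        simpa using hasDerivAt_pow 2 t
      have := ((this.const_mul L).div_const 2).mul_const (‖v‖ ^ 2)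
      exact this.congr_deriv (by ring)
    exact (h1.sub h2).sub h3
  have hmono : AntitoneOn ψ (Set.Icc (0:ℝ) 1) := by
    apply antitoneOn_of_deriv_nonpos (convex_Icc 0 1)
    · exact Continuous.continuousOn (by
        have : Continuous ψ := by
          have := fun t => (hd t).differentiableAt
          exact (Differentiable.continuous fun t => (hd t).differentiableAt)
        exact this)
    · intro t ht
      exact ((hd t).differentiableAt).differentiableWithinAt
    · intro t ht
      rw [interior_Icc] at ht
      rw [(hd t).deriv]
      have hineq : ⟪gradient f (x + t • v) - gradient f x, v⟫ ≤ L * t * ‖v‖ ^ 2 := by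
        calc ⟪gradient f (x + t • v) - gradient f x, v⟫
            ≤ ‖gradient f (x + t • v) - gradient f x‖ * ‖v‖ := real_inner_le_norm _ _
          _ ≤ L * ‖(x + t • v) - x‖ * ‖v‖ := by
              gcongr; exact hsmooth _ _
          _ = L * (|t| * ‖v‖) * ‖v‖ := by
              congr 2; simp [norm_smul]
          _ = L * t * ‖v‖ ^ 2 := by
              rw [abs_of_pos ht.1]; ring
      rw [inner_sub_left] at hineq
      linarith
  have := hmono (Set.left_mem_Icc.2 one_pos.le) (Set.right_mem_Icc.2 one_pos.le) one_pos.le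
  simp [hψ, -inner_gradient_left] at this
  have hxy : x + v = y := by simp [v]
  rw [hxy] at this
  linarith

lemma gd_key (f : E → ℝ) (L : ℝ) (hL : 0 < L)
    (hconv : ConvexOn ℝ Set.univ f) (hdiff : Differentiable ℝ f)
    (hsmooth : ∀ x y : E, ‖gradient f x - gradient f y‖ ≤ L * ‖x - y‖)
    (x y : E) :
    f x + ⟪gradient f x, y - x⟫ + 1 / (2 * L) * ‖gradient f y - gradient f x‖ ^ 2 ≤ f y := by
  set u := gradient f y - gradient f x with hu
  set y' := y - L⁻¹ • u with hy'
  have hdes := gd_descent f L hL hdiff hsmooth y y'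
  have hfoc := gd_foc f hconv hdiff x y'
  have h1 : y' - y = -(L⁻¹ • u) := by rw [hy']; abel
  have h2 : ⟪gradient f y, y' - y⟫ = -(L⁻¹ * ⟪gradient f y, u⟫) := by
    rw [h1, inner_neg_right, real_inner_smul_right]
  have h3 : ‖y' - y‖ ^ 2 = L⁻¹ ^ 2 * ‖u‖ ^ 2 := by
    rw [h1, norm_neg, norm_smul, mul_pow]
    congr 1
    rw [norm_inv, Real.norm_eq_abs, abs_of_pos hL]
  have h4 : ⟪gradient f x, y' - x⟫ = ⟪gradient f x, y - x⟫ - L⁻¹ * ⟪gradient f x, u⟫ := by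
    have : y' - x = (y - x) - L⁻¹ • u := by rw [hy']; abel
    rw [this, inner_sub_right, real_inner_smul_right]
  have h5 : ⟪gradient f y, u⟫ - ⟪gradient f x, u⟫ = ‖u‖ ^ 2 := by
    rw [← inner_sub_left, ← hu, real_inner_self_eq_norm_sq]
  have hLne : (L:ℝ) ≠ 0 := ne_of_gt hL
  rw [h2, h3] at hdes
  rw [h4] at hfoc
  have h6 : L⁻¹ * ⟪gradient f y, u⟫ - L⁻¹ * ⟪gradient f x, u⟫ = L⁻¹ * ‖u‖ ^ 2 := by
    rw [← mul_sub, h5]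
  have e : L / 2 * (L⁻¹ ^ 2 * ‖u‖ ^ 2) = 1 / (2 * L) * ‖u‖ ^ 2 := by
    field_simp
  have hhalf : L⁻¹ * ‖u‖ ^ 2 = 1 / (2 * L) * ‖u‖ ^ 2 + 1 / (2 * L) * ‖u‖ ^ 2 := by
    field_simp
    ring
  linarith

lemma gd_coco (f : E → ℝ) (L : ℝ) (hL : 0 < L)
    (hconv : ConvexOn ℝ Set.univ f) (hdiff : Differentiable ℝ f)
    (hsmooth : ∀ x y : E, ‖gradient f x - gradient f y‖ ≤ L * ‖x - y‖)
    (x y : E) :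
    ‖gradient f x - gradient f y‖ ^ 2 ≤ L * ⟪gradient f x - gradient f y, x - y⟫ := by
  have h1 := gd_key f L hL hconv hdiff hsmooth x y
  have h2 := gd_key f L hL hconv hdiff hsmooth y x
  have e1 : ‖gradient f x - gradient f y‖ = ‖gradient f y - gradient f x‖ := by
    rw [← norm_neg]; congr 1; abel
  have e2 : ⟪gradient f x, y - x⟫ + ⟪gradient f y, x - y⟫
      = -⟪gradient f x - gradient f y, x - y⟫ := by
    rw [inner_sub_left]
    have : (y - x : E) = -(x - y) := by abel
    rw [this, inner_neg_right]
    ring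
  rw [e1] at h2 ⊢
  have hhalf : 1 / (2 * L) + 1 / (2 * L) = 1 / L := by
    rw [← add_div, one_add_one_eq_two, div_eq_div_iff (by positivity) (ne_of_gt hL)]
    ring
  have hhalf2 : 1 / (2 * L) * ‖gradient f y - gradient f x‖ ^ 2
      + 1 / (2 * L) * ‖gradient f y - gradient f x‖ ^ 2
      = 1 / L * ‖gradient f y - gradient f x‖ ^ 2 := by
    rw [← add_mul, hhalf]
  have h4 : 1 / L * ‖gradient f y - gradient f x‖ ^ 2
      ≤ ⟪gradient f x - gradient f y, x - y⟫ := by linarith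
  calc ‖gradient f y - gradient f x‖ ^ 2
      = L * (1 / L * ‖gradient f y - gradient f x‖ ^ 2) := by field_simp
    _ ≤ L * ⟪gradient f x - gradient f y, x - y⟫ :=
        mul_le_mul_of_nonneg_left h4 hL.le

lemma gd_grad_min_zero (f : E → ℝ) (hdiff : Differentiable ℝ f)
    (s : E) (hs : ∀ x, f s ≤ f x) : gradient f s = 0 := by
  have hmin : IsLocalMin f s := Filter.Eventually.of_forall hs
  have := hmin.fderiv_eq_zero
  rw [gradient, this, map_zero]

lemma gd_mul_eq_zero {a B : ℝ} (h : ∀ c : ℝ, c * a ≤ B) : a = 0 := by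
  by_contra ha
  have h1 := h ((B + 1) / a)
  rw [div_mul_cancel₀ _ ha] at h1
  linarith

lemma gd_norm_le_of_sq_le {a b : ℝ} (ha : 0 ≤ a) (hb : 0 ≤ b) (h : a ^ 2 ≤ b ^ 2) :
    a ≤ b := by nlinarith

end GDAux

section GDMain

local notation "⟪" x ", " y "⟫" => @inner ℝ _ _ x y

set_option maxHeartbeats 1600000 in
/-- **Minimum norm solution for gradient descent.**
For convex, differentiable, `L`-smooth `f` and gradient descent iterates with step sizes
`η t ∈ (0, 1/L]` satisfying `Σ η t = ∞`, if the set `S` of global minimizers is a nonempty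
affine subspace (closed under affine combinations), then `θ t` converges to the Euclidean
projection of the initialization `θ 0` onto `S`. -/
theorem gd_min_norm_solution {d : ℕ} (f : EuclideanSpace ℝ (Fin d) → ℝ)
    (L : ℝ) (hL : 0 < L)
    (hconv : ConvexOn ℝ Set.univ f) (hdiff : Differentiable ℝ f)
    (hsmooth : ∀ x y : EuclideanSpace ℝ (Fin d),
      ‖gradient f x - gradient f y‖ ≤ L * ‖x - y‖)
    (η : ℕ → ℝ) (hη : ∀ t, 0 < η t ∧ η t ≤ 1 / L)
    (θ : ℕ → EuclideanSpace ℝ (Fin d))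
    (hupd : ∀ t, θ (t + 1) = θ t - η t • gradient f (θ t))
    (hS : ∃ s : EuclideanSpace ℝ (Fin d), ∀ x, f s ≤ f x)
    (haff : ∀ x y : EuclideanSpace ℝ (Fin d), (∀ u, f x ≤ f u) → (∀ u, f y ≤ f u) →
      ∀ c : ℝ, ∀ u, f (c • x + (1 - c) • y) ≤ f u)
    (hdiv : Tendsto (fun T => ∑ t ∈ Finset.range T, η t) atTop atTop) :
    ∃ p : EuclideanSpace ℝ (Fin d),
      (∀ x, f p ≤ f x) ∧
      (∀ s : EuclideanSpace ℝ (Fin d), (∀ x, f s ≤ f x) → ‖θ 0 - p‖ ≤ ‖θ 0 - s‖) ∧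
      Tendsto θ atTop (nhds p) := by
  classical
  have hFOC : ∀ x y : EuclideanSpace ℝ (Fin d), f x + ⟪gradient f x, y - x⟫ ≤ f y :=
    gd_foc f hconv hdiff
  have hCOCO : ∀ x y : EuclideanSpace ℝ (Fin d),
      ‖gradient f x - gradient f y‖ ^ 2 ≤ L * ⟪gradient f x - gradient f y, x - y⟫ :=
    gd_coco f L hL hconv hdiff hsmooth
  obtain ⟨s₀, hs₀⟩ := hS
  set g : ℕ → EuclideanSpace ℝ (Fin d) := fun t => gradient f (θ t) with hg
  -- cocoercivity toward minimizers
  have coco_s : ∀ (s : EuclideanSpace ℝ (Fin d)), (∀ x, f s ≤ f x) → ∀ x,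
      ‖gradient f x‖ ^ 2 ≤ L * ⟪gradient f x, x - s⟫ := by
    intro s hs x
    have := hCOCO x s
    rwa [gd_grad_min_zero f hdiff s hs, sub_zero] at this
  -- Fejér decrease
  have fejer : ∀ (s : EuclideanSpace ℝ (Fin d)), (∀ x, f s ≤ f x) → ∀ t : ℕ,
      ‖θ (t + 1) - s‖ ^ 2 ≤ ‖θ t - s‖ ^ 2 - η t / L * ‖g t‖ ^ 2 := by
    intro s hs t
    have hexp : θ (t + 1) - s = (θ t - s) - η t • g t := by rw [hupd t]; abel
    have hnorm : ‖θ (t + 1) - s‖ ^ 2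
        = ‖θ t - s‖ ^ 2 - 2 * (η t * ⟪g t, θ t - s⟫) + η t ^ 2 * ‖g t‖ ^ 2 := by
      rw [hexp, @norm_sub_sq_real, real_inner_smul_right, real_inner_comm, norm_smul,
        mul_pow, Real.norm_eq_abs, sq_abs]
    have hco := coco_s s hs (θ t)
    have hηt := hη t
    have h1 : ‖g t‖ ^ 2 / L ≤ ⟪g t, θ t - s⟫ := by
      rw [div_le_iff₀ hL] at *
      nlinarith [hco]
    have h2 : η t ^ 2 * ‖g t‖ ^ 2 ≤ η t / L * ‖g t‖ ^ 2 := by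
      have : η t ^ 2 ≤ η t / L := by
        rw [div_eq_mul_inv]
        have : η t ≤ L⁻¹ := by rw [← one_div]; exact hηt.2
        nlinarith [hηt.1]
      nlinarith [sq_nonneg ‖g t‖]
    have h3 : 2 * (η t * (‖g t‖ ^ 2 / L)) ≤ 2 * (η t * ⟪g t, θ t - s⟫) := by
      have := mul_le_mul_of_nonneg_left h1 hηt.1.le
      linarith
    have h4 : 2 * (η t * (‖g t‖ ^ 2 / L)) = 2 * (η t / L * ‖g t‖ ^ 2) := by ring
    linarith [hnorm, h2, h3]
  -- gradient norm is nonincreasing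
  have gmono : Antitone fun t => ‖g t‖ := by
    apply antitone_nat_of_succ_le
    intro t
    have hηt := hη t
    have hco := hCOCO (θ (t + 1)) (θ t)
    have hΔ : θ (t + 1) - θ t = -(η t • g t) := by rw [hupd t]; abel
    rw [hΔ, inner_neg_right, real_inner_smul_right] at hco
    have hinner : ⟪g (t + 1) - g t, g t⟫ ≤ 0 := by
      nlinarith [sq_nonneg ‖g (t + 1) - g t‖, mul_pos hL hηt.1]
    have hLη : L * η t ≤ 1 := by
      have h := hηt.2
      rw [le_div_iff₀ hL] at h
      linarith
    have hsq : ‖g (t + 1) - g t‖ ^ 2 ≤ -⟪g (t + 1) - g t, g t⟫ := by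
      nlinarith [hco, mul_nonneg hL.le hηt.1.le]
    have hdecomp : g (t + 1) = g t + (g (t + 1) - g t) := by abel
    have hns : ‖g (t + 1)‖ ^ 2 ≤ ‖g t‖ ^ 2 := by
      calc ‖g (t + 1)‖ ^ 2 = ‖g t + (g (t + 1) - g t)‖ ^ 2 := by rw [← hdecomp]
        _ = ‖g t‖ ^ 2 + 2 * ⟪g t, g (t + 1) - g t⟫ + ‖g (t + 1) - g t‖ ^ 2 := by
            rw [@norm_add_sq_real]
        _ ≤ ‖g t‖ ^ 2 := by
            rw [real_inner_comm]
            linarith [hsq, hinner]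
    exact gd_norm_le_of_sq_le (norm_nonneg _) (norm_nonneg _) hns
  -- telescoped sum bound
  have sumbd : ∀ (s : EuclideanSpace ℝ (Fin d)), (∀ x, f s ≤ f x) → ∀ T : ℕ,
      ∑ t ∈ Finset.range T, η t / L * ‖g t‖ ^ 2 ≤ ‖θ 0 - s‖ ^ 2 := by
    intro s hs T
    have key : ∀ T : ℕ, ∑ t ∈ Finset.range T, η t / L * ‖g t‖ ^ 2
        ≤ ‖θ 0 - s‖ ^ 2 - ‖θ T - s‖ ^ 2 := by
      intro T
      induction T with
      | zero => simp
      | succ T ih =>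
        rw [Finset.sum_range_succ]
        have := fejer s hs T
        linarith
    have := key T
    nlinarith [sq_nonneg ‖θ T - s‖]
  -- gradient tends to zero
  have gzero : Tendsto (fun t => ‖g t‖) atTop (nhds 0) := by
    have hbd : ∀ T : ℕ, ‖g T‖ ^ 2 * (∑ t ∈ Finset.range T, η t) ≤ L * ‖θ 0 - s₀‖ ^ 2 := by
      intro T
      have h1 : ∑ t ∈ Finset.range T, η t / L * ‖g T‖ ^ 2
          ≤ ∑ t ∈ Finset.range T, η t / L * ‖g t‖ ^ 2 := by
        apply Finset.sum_le_sum
        intro t ht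
        have hmt : ‖g T‖ ≤ ‖g t‖ := gmono (Finset.mem_range.1 ht).le
        have hsq2 : ‖g T‖ ^ 2 ≤ ‖g t‖ ^ 2 := by nlinarith [norm_nonneg (g T)]
        have hη' := (hη t).1
        nlinarith [div_pos hη' hL]
      have h2 : ∑ t ∈ Finset.range T, η t / L * ‖g T‖ ^ 2
          = (∑ t ∈ Finset.range T, η t) / L * ‖g T‖ ^ 2 := by
        rw [← Finset.sum_mul, ← Finset.sum_div]
      have h3 := sumbd s₀ hs₀ T
      have h4 : (∑ t ∈ Finset.range T, η t) / L * ‖g T‖ ^ 2 ≤ ‖θ 0 - s₀‖ ^ 2 := by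
        rw [← h2]; linarith
      rw [div_mul_eq_mul_div, div_le_iff₀ hL] at h4
      linarith [h4]
    rw [NormedAddCommGroup.tendsto_nhds_zero]
    intro ε hε
    have hM := hdiv.eventually_gt_atTop ((L * ‖θ 0 - s₀‖ ^ 2 + 1) / ε ^ 2)
    filter_upwards [hM, hdiv.eventually_gt_atTop 0] with T hT hT0
    have hb := hbd T
    have hpos : (0:ℝ) < ε ^ 2 := by positivity
    rw [div_lt_iff₀ hpos] at hT
    have : ‖g T‖ ^ 2 < ε ^ 2 := by nlinarith
    rw [Real.norm_eq_abs, abs_of_nonneg (norm_nonneg _)]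
    nlinarith [norm_nonneg (g T)]
  -- gradient tends to zero as a vector
  have gzerov : Tendsto g atTop (nhds 0) := by
    rw [tendsto_zero_iff_norm_tendsto_zero]
    exact gzero
  -- boundedness and convergent subsequence
  have hbdd : ∀ t, θ t ∈ Metric.closedBall s₀ ‖θ 0 - s₀‖ := by
    intro t
    have key : ∀ t : ℕ, ‖θ t - s₀‖ ^ 2 ≤ ‖θ 0 - s₀‖ ^ 2 := by
      intro t
      induction t with
      | zero => exact le_refl _
      | succ t ih =>
        have hf := fejer s₀ hs₀ t
        have hη' := (hη t).1
        have : 0 ≤ η t / L * ‖g t‖ ^ 2 := by positivity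
        linarith
    rw [Metric.mem_closedBall, dist_eq_norm]
    exact gd_norm_le_of_sq_le (norm_nonneg _) (norm_nonneg _) (key t)
  obtain ⟨p, hpmem, φ, hφmono, hφtend⟩ :=
    tendsto_subseq_of_bounded Metric.isBounded_closedBall hbdd
  -- gradient is continuous
  have gcont : Continuous (gradient f) := by
    have : LipschitzWith (Real.toNNReal L) (gradient f) := by
      apply LipschitzWith.of_dist_le_mul
      intro x y
      rw [dist_eq_norm, dist_eq_norm]
      calc ‖gradient f x - gradient f y‖ ≤ L * ‖x - y‖ := hsmooth x y
        _ ≤ Real.toNNReal L * ‖x - y‖ := by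
            gcongr
            exact (Real.le_coe_toNNReal L)
    exact this.continuous
  -- p is a minimizer
  have hgradp : gradient f p = 0 := by
    have h1 : Tendsto (fun k => gradient f (θ (φ k))) atTop (nhds (gradient f p)) :=
      (gcont.tendsto p).comp hφtend
    have h2 : Tendsto (fun k => g (φ k)) atTop (nhds 0) :=
      gzerov.comp hφmono.tendsto_atTop
    exact tendsto_nhds_unique h1 h2
  have hpmin : ∀ x, f p ≤ f x := by
    intro x
    have h := hFOC p x
    rwa [hgradp, inner_zero_left, add_zero] at h
  -- convergence of the whole sequence to p
  have hθp : Tendsto θ atTop (nhds p) := by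
    have hanti : Antitone fun t => ‖θ t - p‖ := by
      apply antitone_nat_of_succ_le
      intro t
      have hf := fejer p hpmin t
      have hη' := (hη t).1
      have h0 : 0 ≤ η t / L * ‖g t‖ ^ 2 := by positivity
      exact gd_norm_le_of_sq_le (norm_nonneg _) (norm_nonneg _) (by linarith)
    have hsub : Tendsto (fun k => ‖θ (φ k) - p‖) atTop (nhds 0) := by
      have : Tendsto (fun k => θ (φ k) - p) atTop (nhds (p - p)) :=
        hφtend.sub tendsto_const_nhds
      rw [sub_self] at this
      rw [← tendsto_zero_iff_norm_tendsto_zero]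
      exact this
    rw [Metric.tendsto_atTop]
    intro ε hε
    rw [Metric.tendsto_atTop] at hsub
    obtain ⟨K, hK⟩ := hsub ε hε
    refine ⟨φ K, fun n hn => ?_⟩
    have h1 := hK K le_rfl
    rw [Real.dist_eq, sub_zero, abs_of_nonneg (norm_nonneg _)] at h1
    calc dist (θ n) p = ‖θ n - p‖ := dist_eq_norm _ _
      _ ≤ ‖θ (φ K) - p‖ := hanti hn
      _ < ε := h1
  -- orthogonality of gradients to differences of minimizers
  have horth : ∀ (s : EuclideanSpace ℝ (Fin d)), (∀ x, f s ≤ f x) →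
      ∀ x, ⟪gradient f x, p - s⟫ = 0 := by
    intro s hs x
    apply gd_mul_eq_zero (B := f s - f x - ⟪gradient f x, s - x⟫)
    intro c
    have hz := haff p s hpmin hs c
    have hzmin : ∀ u, f (c • p + (1 - c) • s) ≤ f u := hz
    have hfoc := hFOC x (c • p + (1 - c) • s)
    have hle : f (c • p + (1 - c) • s) ≤ f s := hzmin s
    have hexp : (c • p + (1 - c) • s : EuclideanSpace ℝ (Fin d)) - x
        = c • (p - s) + (s - x) := by
      module
    rw [hexp, inner_add_right, real_inner_smul_right] at hfoc
    linarith
  -- the inner product of θ 0 - p with p - s vanishes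
  have hinner0 : ∀ (s : EuclideanSpace ℝ (Fin d)), (∀ x, f s ≤ f x) →
      ⟪θ 0 - p, p - s⟫ = 0 := by
    intro s hs
    have hTel : ∀ T : ℕ, ⟪θ 0 - θ T, p - s⟫ = 0 := by
      intro T
      induction T with
      | zero => simp
      | succ T ih =>
        have : θ 0 - θ (T + 1) = (θ 0 - θ T) + η T • g T := by
          rw [hupd T]; abel
        rw [this, inner_add_left, ih, real_inner_smul_left, horth s hs (θ T), mul_zero,
          add_zero]
    have hlim : Tendsto (fun T => ⟪θ 0 - θ T, p - s⟫) atTop (nhds ⟪θ 0 - p, p - s⟫) := by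
      have h1 : Tendsto (fun T => θ 0 - θ T) atTop (nhds (θ 0 - p)) :=
        tendsto_const_nhds.sub hθp
      exact h1.inner tendsto_const_nhds
    have : Tendsto (fun _ : ℕ => (0:ℝ)) atTop (nhds ⟪θ 0 - p, p - s⟫) := by
      refine hlim.congr fun T => (hTel T)
    exact tendsto_nhds_unique this tendsto_const_nhds
  refine ⟨p, hpmin, fun s hs => ?_, hθp⟩
  have h0 := hinner0 s hs
  have hdec : θ 0 - s = (θ 0 - p) + (p - s) := by abel
  have hsq : ‖θ 0 - s‖ ^ 2 = ‖θ 0 - p‖ ^ 2 + ‖p - s‖ ^ 2 := by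
    rw [hdec, @norm_add_sq_real, h0]
    ring
  apply gd_norm_le_of_sq_le (norm_nonneg _) (norm_nonneg _)
  nlinarith [sq_nonneg ‖p - s‖]

end GDMain
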